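/- Tail-closure of represented strings (key step in the proof of Theorem 3.1(ii)): for any strings T, w over the alphabet A with w nonempty, if w is represented in T then the tail w[2..|w|] of w is represented in T. -/

import Mathlib

/-- `w` occurs in `T` at the (1-indexed) position `p`, i.e. `1 ≤ p ≤ |T| - |w| + 1`
and `T[p..p+|w|-1] = w`. -/
def OccursAt {A : Type*} (T w : List A) (p : ℕ) : Prop :=
  1 ≤ p ∧ p + w.length ≤ T.length + 1 ∧ (T.drop (p - 1)).take w.length = w

/-- `w` is represented in `T`: there are positions `p 1 < p 2 < ... < p |w|` such that
for each `1 ≤ ℓ ≤ |w|`, the prefix `w[1..ℓ]` occurs in `T` at position `p ℓ`. -/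
def Represented {A : Type*} (T w : List A) : Prop :=
  ∃ p : ℕ → ℕ,
    (∀ i j, 1 ≤ i → i < j → j ≤ w.length → p i < p j) ∧
    (∀ ℓ, 1 ≤ ℓ → ℓ ≤ w.length → OccursAt T (w.take ℓ) (p ℓ))

/-- Tail-closure of represented strings (key step in the proof of Theorem 3.1(ii)):
if a nonempty `w` is represented in `T`, then its tail `w[2..|w|]` is represented in `T`. -/
theorem represented_tail {A : Type*} (T w : List A)
    (hne : w ≠ []) (hw : Represented T w) : Represented T w.tail := by
  obtain ⟨p, hmono, hocc⟩ := hw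
  have hwlen : 1 ≤ w.length := List.length_pos_iff.mpr hne
  have htail : w.tail.length = w.length - 1 := List.length_tail
  refine ⟨fun ℓ => p (ℓ + 1) + 1, ?_, ?_⟩
  · intro i j hi hij hj
    simp only
    rw [htail] at hj
    have : p (i + 1) < p (j + 1) := by
      apply hmono _ _ (by omega) (by omega)
      omega
    omega
  · intro ℓ hℓ hℓ'
    simp only
    rw [htail] at hℓ'
    have hℓw : ℓ + 1 ≤ w.length := by omega
    obtain ⟨h1, h2, h3⟩ := hocc (ℓ + 1) (by omega) hℓw
    have hlen : (w.take (ℓ + 1)).length = ℓ + 1 := List.length_take_of_le hℓw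
    have hlen' : (w.tail.take ℓ).length = ℓ := List.length_take_of_le (by omega)
    refine ⟨by omega, ?_, ?_⟩
    · rw [hlen'] ; rw [hlen] at h2 ; omega
    · rw [hlen']
      have := congrArg (List.drop 1) h3
      rw [List.drop_take, List.drop_take, List.drop_drop, hlen] at this
      simpa [List.drop_one, Nat.add_sub_cancel, Nat.sub_add_cancel h1] using this
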